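/- arXiv:2511.18883 — 8 statements merged into one kernel-verified Lean document; each statement's English description precedes it below -/
import Mathlib

section
/- Let n be a finite type and A : Matrix n n ℝ a Metzler matrix with all diagonal entries strictly negative. If A is autocatalytic and A is not irreducible, then there exists a subset S of n, nonempty and different from all of n, such that the principal submatrix A[S] is an irreducible autocatalytic Metzler matrix. -/
/-- A real matrix is *autocatalytic* if there is a strictly positive vector `v`
with `A · v` entrywise strictly positive, and every column has a strictly
negative and a strictly positive entry. -/
def IsAutocatalytic {n m : Type*} [Fintype m] (A : Matrix n m ℝ) : Prop :=
  (∃ v : m → ℝ, (∀ j, 0 < v j) ∧ ∀ i, 0 < A.mulVec v i) ∧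
  ∀ j : m, (∃ x, A x j < 0) ∧ (∃ y, 0 < A y j)

/-- A square real matrix is *Metzler* if all off-diagonal entries are nonnegative. -/
def IsMetzler {n : Type*} (A : Matrix n n ℝ) : Prop :=
  ∀ i j, i ≠ j → 0 ≤ A i j

/-- A square real matrix is *irreducible* if there is no nonempty proper subset `S`
of indices with `A i j = 0` for all `i ∈ S`, `j ∉ S`. -/
def MatIrreducible {n : Type*} (A : Matrix n n ℝ) : Prop :=
  ¬ ∃ S : Set n, S.Nonempty ∧ S ≠ Set.univ ∧ ∀ i ∈ S, ∀ j ∉ S, A i j = 0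

/-- A reducible autocatalytic Metzler matrix with strictly negative diagonal contains a
proper nonempty principal submatrix which is an irreducible autocatalytic Metzler matrix. -/
theorem reducible_autocatalytic_metzler_has_irreducible_autocatalytic_block
    {n : Type*} [Fintype n] (A : Matrix n n ℝ)
    (hMetzler : IsMetzler A) (hdiag : ∀ i, A i i < 0)
    (hauto : IsAutocatalytic A) (hred : ¬ MatIrreducible A) :
    ∃ S : Finset n, S.Nonempty ∧ S ≠ Finset.univ ∧
      MatIrreducible (A.submatrix (fun i : S => (i : n)) (fun j : S => (j : n))) ∧
      IsAutocatalytic (A.submatrix (fun i : S => (i : n)) (fun j : S => (j : n))) ∧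
      IsMetzler (A.submatrix (fun i : S => (i : n)) (fun j : S => (j : n))) := by
  classical
  obtain ⟨⟨v, hv, hAv⟩, hcol⟩ := hauto
  set P : Finset n → Prop := fun S => S.Nonempty ∧ S ≠ Finset.univ ∧
      ∀ i ∈ S, ∀ j ∉ S, A i j = 0 with hPdef
  have hex : ∃ S, P S := by
    rw [MatIrreducible, not_not] at hred
    obtain ⟨S0, hne, hnu, hz⟩ := hred
    refine ⟨(Set.toFinite S0).toFinset, ?_, ?_, ?_⟩
    · simpa [Set.Finite.toFinset, Set.Nonempty] using hne
    · intro h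
      apply hnu
      ext x
      simp only [Set.mem_univ, iff_true]
      have : x ∈ (Set.toFinite S0).toFinset := h ▸ Finset.mem_univ x
      simpa using this
    · intro i hi j hj
      exact hz i (by simpa using hi) j (by simpa using hj)
  obtain ⟨S0, hS0⟩ := hex
  obtain ⟨S, hSmem, hmin⟩ := Finset.exists_min_image
    ((Finset.univ.powerset).filter P) Finset.card
    ⟨S0, by simp only [Finset.mem_filter, Finset.mem_powerset]; exact ⟨Finset.subset_univ _, hS0⟩⟩
  simp only [Finset.mem_filter, Finset.mem_powerset] at hSmem
  obtain ⟨-, hSne, hSnu, hSclosed⟩ := hSmem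
  have hminC : ∀ T : Finset n, P T → S.card ≤ T.card := by
    intro T hT
    exact hmin T (by simp only [Finset.mem_filter, Finset.mem_powerset]; exact ⟨Finset.subset_univ _, hT⟩)
  -- key: mulVec of the submatrix agrees with restriction of A.mulVec v
  have hsum : ∀ i ∈ S, (∑ j : S, A i (j : n) * v (j : n)) = A.mulVec v i := by
    intro i hi
    rw [Matrix.mulVec, dotProduct]
    rw [Finset.sum_coe_sort S (fun j => A i j * v j)]
    exact Finset.sum_subset (Finset.subset_univ S)
      (fun j _ hj => by rw [hSclosed i hi j hj, zero_mul])
  refine ⟨S, hSne, hSnu, ?_, ⟨⟨fun j => v (j : n), fun j => hv _, ?_⟩, ?_⟩, ?_⟩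
  · -- irreducible
    rintro ⟨T, hTne, hTnu, hTz⟩
    set T' : Finset n := Finset.univ.filter (fun x => ∃ h : x ∈ S, (⟨x, h⟩ : S) ∈ T) with hT'
    have hmemT' : ∀ x, x ∈ T' ↔ ∃ h : x ∈ S, (⟨x, h⟩ : S) ∈ T := by
      intro x; simp [hT']
    have hT'subS : T' ⊆ S := fun x hx => ((hmemT' x).mp hx).1
    have hPT' : P T' := by
      refine ⟨?_, ?_, ?_⟩
      · obtain ⟨a, ha⟩ := hTne
        exact ⟨(a : n), (hmemT' _).mpr ⟨a.2, by simpa using ha⟩⟩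
      · intro h
        exact hSnu (Finset.univ_subset_iff.mp (h ▸ hT'subS))
      · intro i hi j hj
        obtain ⟨hiS, hiT⟩ := (hmemT' i).mp hi
        by_cases hjS : j ∈ S
        · have : (⟨j, hjS⟩ : S) ∉ T := fun hjT => hj ((hmemT' j).mpr ⟨hjS, hjT⟩)
          exact hTz ⟨i, hiS⟩ hiT ⟨j, hjS⟩ this
        · exact hSclosed i hiS j hjS
    have hlt : T'.card < S.card := by
      apply Finset.card_lt_card
      refine ⟨hT'subS, ?_⟩
      intro hST'
      obtain ⟨a, ha⟩ : ∃ a : S, a ∉ T := by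
        by_contra h
        push_neg at h
        exact hTnu (Set.eq_univ_of_forall h)
      obtain ⟨h1, h2⟩ := (hmemT' (a : n)).mp (hST' a.2)
      exact ha (by convert h2)
    exact absurd (hminC T' hPT') (not_le.mpr hlt)
  · -- mulVec positive
    intro i
    have := hsum (i : n) i.2
    rw [Matrix.mulVec, dotProduct]
    simp only [Matrix.submatrix_apply]
    rw [show (∑ j : S, A (i : n) (j : n) * v (j : n)) = A.mulVec v (i : n) from this]
    exact hAv _
  · -- column condition
    intro j
    refine ⟨⟨j, by simpa using hdiag (j : n)⟩, ?_⟩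
    by_contra h
    push_neg at h
    have hzero : ∀ y ∈ S, y ≠ (j : n) → A y (j : n) = 0 := by
      intro y hy hyj
      exact le_antisymm (h ⟨y, hy⟩) (hMetzler y (j : n) hyj)
    have hnej : ∃ i ∈ S, i ≠ (j : n) := by
      by_contra hc
      push_neg at hc
      have h1 : ∑ k ∈ S, A (j : n) k * v k = A.mulVec v (j : n) := by
        rw [← Finset.sum_coe_sort]; exact hsum _ j.2
      rw [Finset.sum_eq_single_of_mem (j : n) j.2
        (fun b hb hbj => by rw [hc b hb] at hbj; exact absurd rfl hbj)] at h1
      have := hAv (j : n)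
      rw [← h1] at this
      nlinarith [hdiag (j : n), hv (j : n)]
    obtain ⟨i0, hi0S, hi0j⟩ := hnej
    have hPT : P (S.erase (j : n)) := by
      refine ⟨⟨i0, Finset.mem_erase.mpr ⟨hi0j, hi0S⟩⟩, ?_, ?_⟩
      · intro h'
        exact hSnu (Finset.univ_subset_iff.mp (h' ▸ Finset.erase_subset (j : n) S))
      · intro i hi k hk
        obtain ⟨hij, hiS⟩ := Finset.mem_erase.mp hi
        by_cases hkS : k ∈ S
        · have : k = (j : n) := by
            by_contra hc
            exact hk (Finset.mem_erase.mpr ⟨hc, hkS⟩)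
          rw [this]
          exact hzero i hiS hij
        · exact hSclosed i hiS k hkS
    have hlt : (S.erase (j : n)).card < S.card :=
      Finset.card_erase_lt_of_mem j.2
    exact absurd (hminC _ hPT) (not_le.mpr hlt)
  · -- Metzler
    intro i j hij
    exact hMetzler (i : n) (j : n) (fun h => hij (Subtype.ext h))
end

section
/- Let n be a nonempty finite type and A : Matrix n n ℝ an irreducible autocatalytic Metzler matrix with all diagonal entries strictly negative, and suppose A is centralized. Then det A = (∏_{m} A m m) · (1 − ∑_{σ} ∏_{m ∈ support σ} (A m (σ m) / |A m m|)), where the sum ranges over all permutations σ of n that are cycles (Equiv.Perm.IsCycle) and the product is over the support of σ. -/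
/-- `A` is *centralized* if there is an index `m₀` such that every contributing
cycle `σ` (a cyclic permutation with nonzero product of selected entries)
satisfies `0 < A m₀ (σ m₀)`. -/
def IsCentralized {n : Type*} [Fintype n] [DecidableEq n] (A : Matrix n n ℝ) : Prop :=
  ∃ m₀ : n, ∀ σ : Equiv.Perm n, σ.IsCycle →
    (∏ m ∈ σ.support, A m (σ m)) ≠ 0 → 0 < A m₀ (σ m₀)

open scoped Classical in
/-- For a centralized irreducible autocatalytic Metzler matrix with strictly negative
diagonal, the determinant is given by the cycle expansion
`det A = (∏ m, A m m) · (1 - ∑_{cycles σ} ∏_{m ∈ supp σ} A m (σ m) / |A m m|)`. -/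
theorem centralized_det_cycle_formula
    {n : Type*} [Fintype n] [DecidableEq n] [Nonempty n]
    (A : Matrix n n ℝ) (hMetzler : IsMetzler A) (hdiag : ∀ i, A i i < 0)
    (hirr : MatIrreducible A) (hauto : IsAutocatalytic A)
    (hcent : IsCentralized A) :
    A.det = (∏ m, A m m) *
      (1 - ∑ σ ∈ Finset.univ.filter (fun σ : Equiv.Perm n => σ.IsCycle),
        ∏ m ∈ σ.support, A m (σ m) / |A m m|) := by
  classical
  obtain ⟨m₀, hm₀⟩ := hcent
  -- every contributing cycle contains m₀ in its support
  have key : ∀ σ : Equiv.Perm n, σ.IsCycle →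
      (∏ m ∈ σ.support, A m (σ m)) ≠ 0 → m₀ ∈ σ.support := by
    intro σ hσ hne
    by_contra h
    have hfix : σ m₀ = m₀ := Equiv.Perm.notMem_support.mp h
    have := hm₀ σ hσ hne
    rw [hfix] at this
    exact absurd this (not_lt.mpr (le_of_lt (hdiag m₀)))
  set f : Equiv.Perm n → ℝ :=
    fun σ => ((Equiv.Perm.sign σ : ℤ) : ℝ) * ∏ i, A i (σ i) with hf
  -- determinant as sum over permutations of f
  have hdet : A.det = ∑ σ : Equiv.Perm n, f σ := by
    rw [← Matrix.det_transpose, Matrix.det_apply']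
    refine Finset.sum_congr rfl fun σ _ => ?_
    simp [hf, Matrix.transpose_apply]
  -- non-identity non-cycle permutations contribute 0
  have vanish : ∀ σ : Equiv.Perm n, σ ≠ 1 → ¬ σ.IsCycle → f σ = 0 := by
    intro σ hne hnc
    have hfac : σ.cycleFactorsFinset ≠ ∅ := by
      rw [Ne, Equiv.Perm.cycleFactorsFinset_eq_empty_iff]; exact hne
    -- show the product vanishes
    rcases eq_or_ne (∏ i, A i (σ i)) 0 with h0 | h0
    · simp [hf, h0]
    exfalso
    have hall : ∀ i, A i (σ i) ≠ 0 := by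
      intro i
      exact Finset.prod_ne_zero_iff.mp h0 i (Finset.mem_univ i)
    -- each cycle factor is contributing, hence contains m₀
    have hmem : ∀ c ∈ σ.cycleFactorsFinset, m₀ ∈ c.support := by
      intro c hc
      obtain ⟨hcyc, hagree⟩ := Equiv.Perm.mem_cycleFactorsFinset_iff.mp hc
      apply key c hcyc
      have : (∏ m ∈ c.support, A m (c m)) = ∏ m ∈ c.support, A m (σ m) :=
        Finset.prod_congr rfl fun m hm => by rw [hagree m hm]
      rw [this]
      exact Finset.prod_ne_zero_iff.mpr fun m _ => hall m
    -- there are at least two factors, whose supports are disjoint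
    obtain ⟨c, hc⟩ := Finset.nonempty_iff_ne_empty.mpr hfac
    obtain ⟨d, hd, hcd⟩ : ∃ d ∈ σ.cycleFactorsFinset, d ≠ c := by
      by_contra h
      push_neg at h
      have : σ.cycleFactorsFinset = {c} := by
        apply Finset.eq_singleton_iff_unique_mem.mpr ⟨hc, h⟩
      exact hnc (Equiv.Perm.cycleFactorsFinset_eq_singleton_iff.mp this).1
    have hdisj : c.Disjoint d :=
      σ.cycleFactorsFinset_pairwise_disjoint hc hd hcd.symm
    have := Equiv.Perm.Disjoint.disjoint_support hdisj
    exact (Finset.disjoint_left.mp this (hmem c hc)) (hmem d hd)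
  -- value at the identity
  have hone : f 1 = ∏ m, A m m := by simp [hf]
  -- value at a cycle
  have hcycval : ∀ σ : Equiv.Perm n, σ.IsCycle →
      f σ = -((∏ m, A m m) * ∏ m ∈ σ.support, A m (σ m) / |A m m|) := by
    intro σ hσ
    have hsign : (Equiv.Perm.sign σ : ℤ) = -(-1) ^ σ.support.card := by
      rw [hσ.sign]; simp
    have habs : ∀ m, |A m m| = -A m m := fun m => abs_of_neg (hdiag m)
    have hDne : ∀ m, A m m ≠ 0 := fun m => ne_of_lt (hdiag m)
    set s := σ.support
    have hsplit : (∏ i, A i (σ i)) =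
        (∏ m ∈ s, A m (σ m)) * ∏ m ∈ sᶜ, A m m := by
      rw [← Finset.prod_mul_prod_compl s]
      congr 1
      refine Finset.prod_congr rfl fun m hm => ?_
      rw [Equiv.Perm.notMem_support.mp (Finset.mem_compl.mp hm)]
    have hdsplit : (∏ m, A m m) = (∏ m ∈ s, A m m) * ∏ m ∈ sᶜ, A m m := by
      rw [Finset.prod_mul_prod_compl]
    have hquot : (∏ m ∈ s, A m (σ m) / |A m m|) =
        (∏ m ∈ s, A m (σ m)) / ((-1) ^ s.card * ∏ m ∈ s, A m m) := by
      rw [Finset.prod_div_distrib]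
      congr 1
      calc (∏ m ∈ s, |A m m|) = ∏ m ∈ s, (-1) * A m m := by
            refine Finset.prod_congr rfl fun m _ => ?_
            rw [habs m]; ring
        _ = (-1) ^ s.card * ∏ m ∈ s, A m m := by
            rw [Finset.prod_mul_distrib, Finset.prod_const]
    have hDs : (∏ m ∈ s, A m m) ≠ 0 :=
      Finset.prod_ne_zero_iff.mpr fun m _ => hDne m
    have hpow : ((-1 : ℝ)) ^ s.card ≠ 0 := by
      simp [pow_ne_zero]
    have hpow2 : ((-1 : ℝ)) ^ s.card * (-1) ^ s.card = 1 := by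
      rw [← pow_add, ← two_mul, pow_mul]
      norm_num
    rw [hf]
    push_cast [hsign]
    rw [hsplit, hdsplit, hquot]
    field_simp
    ring_nf
    rw [mul_comm σ.support.card 2, pow_mul]
    norm_num
  -- assemble
  have hsubset : (insert (1 : Equiv.Perm n)
      (Finset.univ.filter fun σ : Equiv.Perm n => σ.IsCycle)) ⊆ Finset.univ :=
    Finset.subset_univ _
  have hnotone : (1 : Equiv.Perm n) ∉
      (Finset.univ.filter fun σ : Equiv.Perm n => σ.IsCycle) := by
    simp only [Finset.mem_filter, Finset.mem_univ, true_and]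
    intro h
    exact h.ne_one rfl
  have hsum : ∑ σ : Equiv.Perm n, f σ =
      f 1 + ∑ σ ∈ Finset.univ.filter (fun σ : Equiv.Perm n => σ.IsCycle), f σ := by
    rw [← Finset.sum_insert hnotone]
    symm
    apply Finset.sum_subset hsubset
    intro σ _ hσ
    simp only [Finset.mem_insert, Finset.mem_filter, Finset.mem_univ, true_and,
      not_or] at hσ
    exact vanish σ hσ.1 hσ.2
  rw [hdet, hsum, hone]
  rw [Finset.sum_congr rfl fun σ hσ =>
    hcycval σ (Finset.mem_filter.mp hσ).2]
  rw [Finset.sum_neg_distrib, ← Finset.mul_sum]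
  ring
end

section
/- Let n be a nonempty finite type with Fintype.card n = k, and let A : Matrix n n ℝ be an irreducible autocatalytic Metzler matrix with all diagonal entries strictly negative that is centralized, and suppose moreover that every entry of A lies in {−1, 0, 1}. Then det A · (−1)^k = 1 − N, where N is the number of permutations σ of n that are cycles (Equiv.Perm.IsCycle) with ∏_{m ∈ support σ} A m (σ m) ≠ 0. -/
open scoped Classical in
/-- For a centralized irreducible autocatalytic Metzler matrix with strictly negative
diagonal whose entries all lie in `{-1, 0, 1}`, one has `det A · (-1)^k = 1 - N`,
where `N` is the number of contributing permutation cycles. -/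
theorem centralized_unit_entries_det_count_cycles
    {n : Type*} [Fintype n] [DecidableEq n] [Nonempty n] {k : ℕ}
    (hk : Fintype.card n = k)
    (A : Matrix n n ℝ) (hMetzler : IsMetzler A) (hdiag : ∀ i, A i i < 0)
    (hirr : MatIrreducible A) (hauto : IsAutocatalytic A)
    (hcent : IsCentralized A)
    (hentries : ∀ i j, A i j = -1 ∨ A i j = 0 ∨ A i j = 1) :
    A.det * (-1 : ℝ) ^ k =
      1 - ((Finset.univ.filter (fun σ : Equiv.Perm n =>
            σ.IsCycle ∧ (∏ m ∈ σ.support, A m (σ m)) ≠ 0)).card : ℝ) := by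
  obtain ⟨m₀, hm₀⟩ := hcent
  have hdiag1 : ∀ i, A i i = -1 := by
    intro i
    rcases hentries i i with h | h | h
    · exact h
    · exact absurd (hdiag i) (by rw [h]; norm_num)
    · exact absurd (hdiag i) (by rw [h]; norm_num)
  have hone : ∀ (σ : Equiv.Perm n) m, σ m ≠ m → A m (σ m) ≠ 0 → A m (σ m) = 1 := by
    intro σ m hne h0
    rcases hentries m (σ m) with h | h | h
    · exact absurd (hMetzler m (σ m) (Ne.symm hne)) (by rw [h]; norm_num)
    · exact absurd h h0
    · exact h
  -- entries on the support are 1 when the support product is nonzero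
  have hsupp1 : ∀ σ : Equiv.Perm n, (∏ m ∈ σ.support, A m (σ m)) ≠ 0 →
      ∀ m ∈ σ.support, A m (σ m) = 1 := by
    intro σ hσ m hm
    exact hone σ m (Equiv.Perm.mem_support.mp hm)
      (fun h => hσ (Finset.prod_eq_zero hm h))
  set C : Finset (Equiv.Perm n) := Finset.univ.filter (fun σ : Equiv.Perm n =>
      σ.IsCycle ∧ (∏ m ∈ σ.support, A m (σ m)) ≠ 0) with hC
  -- key: nonzero full product forces identity or contributing cycle
  have key : ∀ σ : Equiv.Perm n, (∏ i, A i (σ i)) ≠ 0 → σ ∈ insert 1 C := by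
    intro σ hσ
    have hs1 : ∀ m ∈ σ.support, A m (σ m) = 1 := by
      intro m hm
      exact hone σ m (Equiv.Perm.mem_support.mp hm)
        (fun h => hσ (Finset.prod_eq_zero (Finset.mem_univ m) h))
    have hfac : ∀ τ ∈ σ.cycleFactorsFinset, m₀ ∈ τ.support := by
      intro τ hτ
      obtain ⟨hc, hagree⟩ := Equiv.Perm.mem_cycleFactorsFinset_iff.mp hτ
      have hsub := Equiv.Perm.mem_cycleFactorsFinset_support_le hτ
      have hprod : (∏ m ∈ τ.support, A m (τ m)) = 1 := by
        rw [Finset.prod_congr rfl (fun m hm => by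
          rw [hagree m hm, hs1 m (hsub hm)])]
        exact Finset.prod_const_one
      have hpos := hm₀ τ hc (by rw [hprod]; norm_num)
      by_contra hmem
      rw [Equiv.Perm.notMem_support.mp hmem, hdiag1] at hpos
      norm_num at hpos
    have hcard : σ.cycleFactorsFinset.card ≤ 1 := by
      apply Finset.card_le_one.mpr
      intro τ₁ hτ₁ τ₂ hτ₂
      by_contra hne
      have hdisj := (Equiv.Perm.cycleFactorsFinset_pairwise_disjoint σ) hτ₁ hτ₂ hne
      exact (Finset.disjoint_left.mp hdisj.disjoint_support (hfac τ₁ hτ₁)) (hfac τ₂ hτ₂)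
    interval_cases h : σ.cycleFactorsFinset.card
    · have : σ = 1 := Equiv.Perm.cycleFactorsFinset_eq_empty_iff.mp
        (Finset.card_eq_zero.mp h)
      simp [this]
    · obtain ⟨τ, hτ⟩ := Finset.card_eq_one.mp h
      obtain ⟨hcyc, rfl⟩ := Equiv.Perm.cycleFactorsFinset_eq_singleton_iff.mp hτ
      refine Finset.mem_insert_of_mem (Finset.mem_filter.mpr ⟨Finset.mem_univ _, hcyc, ?_⟩)
      rw [Finset.prod_congr rfl hs1, Finset.prod_const_one]
      norm_num
  have h1C : (1 : Equiv.Perm n) ∉ C := by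
    intro h
    exact (Finset.mem_filter.mp h).2.1.ne_one rfl
  have hdet : A.det = ∑ σ : Equiv.Perm n,
      ((Equiv.Perm.sign σ : ℤ) : ℝ) * ∏ i, A i (σ i) := by
    rw [← Matrix.det_transpose A, Matrix.det_apply']
    rfl
  have hrestrict : A.det = ∑ σ ∈ insert 1 C,
      ((Equiv.Perm.sign σ : ℤ) : ℝ) * ∏ i, A i (σ i) := by
    rw [hdet]
    refine (Finset.sum_subset (Finset.subset_univ _) ?_).symm
    intro σ _ hσ
    by_cases hp : (∏ i, A i (σ i)) = 0
    · rw [hp, mul_zero]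
    · exact absurd (key σ hp) hσ
  have hterm1 : ((Equiv.Perm.sign (1 : Equiv.Perm n) : ℤ) : ℝ) *
      ∏ i, A i ((1 : Equiv.Perm n) i) = (-1 : ℝ) ^ k := by
    simp only [Equiv.Perm.sign_one, Units.val_one, Int.cast_one, one_mul,
      Equiv.Perm.one_apply]
    rw [Finset.prod_congr rfl (fun i _ => hdiag1 i), Finset.prod_const,
      Finset.card_univ, hk]
  have htermC : ∀ σ ∈ C, ((Equiv.Perm.sign σ : ℤ) : ℝ) * ∏ i, A i (σ i)
      = -(-1 : ℝ) ^ k := by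
    intro σ hσ
    obtain ⟨-, hcyc, hprod⟩ := Finset.mem_filter.mp hσ
    have hs1 := hsupp1 σ hprod
    have hsign : ((Equiv.Perm.sign σ : ℤ) : ℝ) = -(-1 : ℝ) ^ σ.support.card := by
      rw [hcyc.sign]; push_cast; ring
    have hsplit : (∏ i, A i (σ i)) =
        (∏ i ∈ σ.support, A i (σ i)) * ∏ i ∈ σ.supportᶜ, A i (σ i) :=
      (Finset.prod_mul_prod_compl _ _).symm
    have h2 : (∏ i ∈ σ.support, A i (σ i)) = 1 := by
      rw [Finset.prod_congr rfl hs1]; exact Finset.prod_const_one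
    have h3 : (∏ i ∈ σ.supportᶜ, A i (σ i)) = (-1 : ℝ) ^ (k - σ.support.card) := by
      rw [Finset.prod_congr rfl (fun i hi => by
        rw [Equiv.Perm.notMem_support.mp (Finset.mem_compl.mp hi), hdiag1]),
        Finset.prod_const, Finset.card_compl, hk]
    have hle : σ.support.card ≤ k := hk ▸ Finset.card_le_univ _
    rw [hsplit, h2, h3, hsign, one_mul, neg_mul, ← pow_add,
      Nat.add_sub_cancel' hle]
  rw [hrestrict, Finset.sum_insert h1C, hterm1, Finset.sum_congr rfl htermC,
    Finset.sum_const, nsmul_eq_mul]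
  have hsq : (-1 : ℝ) ^ k * (-1 : ℝ) ^ k = 1 := by
    rw [← pow_add]
    exact (neg_one_pow_eq_one_iff_even (by norm_num)).mpr (Even.add_self k)
  linear_combination (1 - (C.card : ℝ)) * hsq
end

section
/- Let l, k be natural numbers with 0 < k < l, and let A : Matrix (Fin l) (Fin l) ℝ satisfy: (Metzler) 0 ≤ A i j for all i ≠ j; (ear diagonal) A j j < 0 for every j with k ≤ j.val; (ear chain) 0 < A j j' whenever k ≤ j.val, j.val + 1 < l and j'.val = j.val + 1; (return edge) 0 < A ⟨l−1⟩ ⟨0⟩; and (autocatalytic leading block) there exists w : Fin k → ℝ with all entries strictly positive such that for every i : Fin k, 0 < ∑_{j : Fin k} A (castLE i) (castLE j) · w j. Then there exists u : Fin l → ℝ with all entries strictly positive such that every entry of the matrix–vector product A·u is strictly positive. -/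
/-- Adding a single directed ear (a chain of indices `k, …, l-1` with strictly
negative diagonal, strictly positive superdiagonal, and a positive return edge to
index `0`) to a leading block admitting a strictly positive vector with strictly
positive image preserves this property for the whole Metzler matrix. -/
theorem ear_extension_preserves_positive_image
    (l k : ℕ) (hk : 0 < k) (hkl : k < l)
    (A : Matrix (Fin l) (Fin l) ℝ)
    (hMetzler : ∀ i j : Fin l, i ≠ j → 0 ≤ A i j)
    (hEarDiag : ∀ j : Fin l, k ≤ j.val → A j j < 0)
    (hEarChain : ∀ j j' : Fin l, k ≤ j.val → j.val + 1 < l → j'.val = j.val + 1 →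
      0 < A j j')
    (hReturn : 0 < A ⟨l - 1, by omega⟩ ⟨0, by omega⟩)
    (hBlock : ∃ w : Fin k → ℝ, (∀ j, 0 < w j) ∧
      ∀ i : Fin k, 0 < ∑ j : Fin k,
        A (Fin.castLE hkl.le i) (Fin.castLE hkl.le j) * w j) :
    ∃ u : Fin l → ℝ, (∀ i, 0 < u i) ∧ ∀ i, 0 < A.mulVec u i := by
  obtain ⟨w, hw, hwA⟩ := hBlock
  set g : Fin l → ℝ := fun j =>
    max 0 (if h : j.val + 1 < l then (-A j j) / (A j ⟨j.val + 1, h⟩) else 0) with hgdef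
  have hg0 : ∀ j, 0 ≤ g j := fun j => le_max_left 0 _
  set r : ℝ := 1 + ∑ j, g j with hrdef
  have hsum0 : 0 ≤ ∑ j, g j := Finset.sum_nonneg fun j _ => hg0 j
  have hr1 : (1:ℝ) ≤ r := by simp only [hrdef]; linarith
  have hr0 : (0:ℝ) < r := by linarith
  have hrbound : ∀ j : Fin l, k ≤ j.val → ∀ h : j.val + 1 < l,
      -A j j < r * A j ⟨j.val + 1, h⟩ := by
    intro j hj h
    have hA : 0 < A j ⟨j.val + 1, h⟩ := hEarChain j _ hj h rfl
    have h1 : (-A j j) / (A j ⟨j.val + 1, h⟩) ≤ g j := by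
      simp only [hgdef, dif_pos h]
      exact le_max_right _ _
    have h2 : g j ≤ ∑ j', g j' := Finset.single_le_sum (fun j' _ => hg0 j') (Finset.mem_univ j)
    have h3 : (-A j j) / (A j ⟨j.val + 1, h⟩) < r := by rw [hrdef]; linarith
    calc -A j j = ((-A j j) / (A j ⟨j.val + 1, h⟩)) * A j ⟨j.val + 1, h⟩ := by
            field_simp
      _ < r * A j ⟨j.val + 1, h⟩ := mul_lt_mul_of_pos_right h3 hA
  set q : Fin l := ⟨l - 1, by omega⟩ with hq
  set z : Fin l := ⟨0, by omega⟩ with hz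
  have hqk : k ≤ q.val := by simp [hq]; omega
  have hAqq : A q q < 0 := hEarDiag q hqk
  set C : ℝ := A q z * w ⟨0, hk⟩ with hC
  have hC0 : 0 < C := mul_pos hReturn (hw _)
  set D : ℝ := (-A q q) * r ^ (l - 1 - k) with hD
  have hD0 : 0 < D := mul_pos (by linarith) (pow_pos hr0 _)
  set δ : ℝ := C / (2 * D) with hδ
  have hδ0 : 0 < δ := div_pos hC0 (by linarith)
  have hDδ : D * δ < C := by
    rw [hδ]
    rw [div_eq_iff (by linarith : (2*D) ≠ 0)] at *
    nlinarith
  set u : Fin l → ℝ := fun j => if h : j.val < k then w ⟨j.val, h⟩ else δ * r ^ (j.val - k)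
    with hu
  have hu0 : ∀ j, 0 < u j := by
    intro j
    simp only [hu]
    split
    · exact hw _
    · exact mul_pos hδ0 (pow_pos hr0 _)
  refine ⟨u, hu0, ?_⟩
  intro i
  rw [Matrix.mulVec, dotProduct]
  by_cases hik : i.val < k
  · -- block row
    set s : Finset (Fin l) := Finset.univ.map (Fin.castLEEmb hkl.le) with hs
    have hmem : ∀ j : Fin l, j ∈ s ↔ j.val < k := by
      intro j
      simp only [hs, Finset.mem_map, Finset.mem_univ, true_and]
      constructor
      · rintro ⟨a, rfl⟩; exact a.isLt
      · intro hj; exact ⟨⟨j.val, hj⟩, by ext; simp⟩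
    have hsub : 0 < ∑ j ∈ s, A i j * u j := by
      rw [hs, Finset.sum_map]
      have : ∀ a : Fin k, A i (Fin.castLEEmb hkl.le a) * u (Fin.castLEEmb hkl.le a)
          = A (Fin.castLE hkl.le ⟨i.val, hik⟩) (Fin.castLE hkl.le a) * w a := by
        intro a
        have h1 : (Fin.castLEEmb hkl.le a : Fin l) = Fin.castLE hkl.le a := rfl
        have h2 : i = Fin.castLE hkl.le ⟨i.val, hik⟩ := by ext; simp
        have h3 : u (Fin.castLE hkl.le a) = w a := by
          simp only [hu]
          rw [dif_pos (by simp : (Fin.castLE hkl.le a).val < k)]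
          rfl
        rw [h1, h3, ← h2]
      rw [Finset.sum_congr rfl (fun a _ => this a)]
      exact hwA ⟨i.val, hik⟩
    have hle : ∑ j ∈ s, A i j * u j ≤ ∑ j, A i j * u j := by
      apply Finset.sum_le_sum_of_subset_of_nonneg (Finset.subset_univ s)
      intro j _ hjs
      have hj : ¬ j.val < k := by rw [← hmem]; exact hjs
      have hij : i ≠ j := by intro h; rw [h] at hik; exact hj hik
      exact mul_nonneg (hMetzler i j hij) (hu0 j).le
    linarith
  · push_neg at hik
    by_cases hil : i.val + 1 < l
    · -- ear chain row
      set i' : Fin l := ⟨i.val + 1, hil⟩ with hi'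
      have hii' : i ≠ i' := by intro h; have := congrArg Fin.val h; simp [hi'] at this
      have key : 0 < A i i * u i + A i i' * u i' := by
        have hui : u i = δ * r ^ (i.val - k) := by simp only [hu]; rw [dif_neg (by omega)]
        have hui' : u i' = δ * r ^ (i.val - k) * r := by
          simp only [hu, hi']
          rw [dif_neg (by omega)]
          rw [mul_assoc, ← pow_succ]
          congr 2
          omega
        rw [hui, hui']
        have hb := hrbound i hik hil
        have hp : 0 < δ * r ^ (i.val - k) := mul_pos hδ0 (pow_pos hr0 _)
        nlinarith
      have hpair : A i i * u i + A i i' * u i' = ∑ j ∈ {i, i'}, A i j * u j := by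
        rw [Finset.sum_pair hii']
      have hle : ∑ j ∈ ({i, i'} : Finset (Fin l)), A i j * u j ≤ ∑ j, A i j * u j := by
        apply Finset.sum_le_sum_of_subset_of_nonneg (Finset.subset_univ _)
        intro j _ hjs
        simp only [Finset.mem_insert, Finset.mem_singleton] at hjs
        push_neg at hjs
        exact mul_nonneg (hMetzler i j (Ne.symm hjs.1)) (hu0 j).le
      rw [hpair] at key
      linarith
    · -- return row: i = q
      have hiq : i = q := by ext; simp [hq]; omega
      subst hiq
      have hqz : q ≠ z := by
        intro h; have := congrArg Fin.val h; simp [hq, hz] at this; omega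
      have key : 0 < A q q * u q + A q z * u z := by
        have huq : u q = δ * r ^ (l - 1 - k) := by
          simp only [hu, hq]; rw [dif_neg (by omega)]
        have huz : u z = w ⟨0, hk⟩ := by
          simp only [hu, hz]; rw [dif_pos hk]
        rw [huq, huz]
        have : A q q * (δ * r ^ (l - 1 - k)) = -(D * δ) := by rw [hD]; ring
        rw [this]
        rw [hC] at hDδ
        linarith
      have hpair : A q q * u q + A q z * u z = ∑ j ∈ {q, z}, A q j * u j := by
        rw [Finset.sum_pair hqz]
      have hle : ∑ j ∈ ({q, z} : Finset (Fin l)), A q j * u j ≤ ∑ j, A q j * u j := by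
        apply Finset.sum_le_sum_of_subset_of_nonneg (Finset.subset_univ _)
        intro j _ hjs
        simp only [Finset.mem_insert, Finset.mem_singleton] at hjs
        push_neg at hjs
        exact mul_nonneg (hMetzler q j (Ne.symm hjs.1)) (hu0 j).le
      rw [hpair] at key
      linarith
end

section
/- Let n be a finite type, A : Matrix n n ℝ, and S a nonempty subset of n such that the principal submatrix A[S] is Hurwitz-unstable. Then A is D-unstable: there exists d : n → ℝ with all entries strictly positive such that the matrix A * Matrix.diagonal d is Hurwitz-unstable. -/
open Polynomial Matrix Filter Topology

/-- A square real matrix is *Hurwitz-unstable* if its characteristic polynomial,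
viewed over `ℂ`, has a root with strictly positive real part. -/
def HurwitzUnstable {n : Type*} [Fintype n] [DecidableEq n] (A : Matrix n n ℝ) : Prop :=
  ∃ z : ℂ, ((A.charpoly).map (algebraMap ℝ ℂ)).IsRoot z ∧ 0 < z.re

/-- Characteristic polynomial evaluation as a determinant. -/
lemma myEvalCharpoly {m : Type*} [Fintype m] [DecidableEq m] {R : Type*} [CommRing R]
    (M : Matrix m m R) (x : R) :
    M.charpoly.eval x = (Matrix.diagonal (fun _ => x) - M).det := by
  rw [Matrix.charpoly, eval_det, Matrix.matPolyEquiv_charmatrix]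
  rw [Polynomial.eval_sub, Polynomial.eval_X, Polynomial.eval_C]
  congr 1

lemma myPowLeProd (c : ℝ) (hc : 0 ≤ c) :
    ∀ (m : Multiset ℝ), (∀ x ∈ m, c ≤ x) → c ^ Multiset.card m ≤ m.prod := by
  intro m
  induction m using Multiset.induction with
  | empty => simp
  | cons a s ih =>
    intro h
    rw [Multiset.card_cons, Multiset.prod_cons, pow_succ, mul_comm]
    exact mul_le_mul (h a (Multiset.mem_cons_self a s))
      (ih fun x hx => h x (Multiset.mem_cons_of_mem hx))
      (pow_nonneg hc _) (le_trans hc (h a (Multiset.mem_cons_self a s)))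

/-- If a real matrix is not Hurwitz-unstable, the evaluation of its (complexified)
characteristic polynomial at a point with positive real part is bounded below. -/
lemma myNormEvalGe {m : Type*} [Fintype m] [DecidableEq m] (M : Matrix m m ℝ) (z : ℂ)
    (hz : 0 < z.re) (h : ¬ HurwitzUnstable M) :
    z.re ^ Fintype.card m ≤ ‖(M.charpoly.map (algebraMap ℝ ℂ)).eval z‖ := by
  set P : ℂ[X] := M.charpoly.map (algebraMap ℝ ℂ) with hP
  have hmonic : P.Monic := (M.charpoly_monic).map _
  have hPne : P ≠ 0 := hmonic.ne_zero
  have hdeg : P.natDegree = Fintype.card m := by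
    rw [hP, Polynomial.natDegree_map_eq_of_injective (algebraMap ℝ ℂ).injective,
      Matrix.charpoly_natDegree_eq_dim]
  have hsplit : P.Splits := IsAlgClosed.splits P
  have hcard : Multiset.card P.roots = Fintype.card m := by
    rw [← hdeg]
    exact (Polynomial.splits_iff_card_roots.mp hsplit)
  have hroots : ∀ r ∈ P.roots, r.re ≤ 0 := by
    intro r hr
    by_contra hrc
    exact h ⟨r, (Polynomial.mem_roots hPne).mp hr, lt_of_not_ge hrc⟩
  have hfact : P = (P.roots.map fun a => X - Polynomial.C a).prod :=
    hsplit.eq_prod_roots_of_monic hmonic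
  have heval : P.eval z = (P.roots.map fun a => z - a).prod := by
    conv_lhs => rw [hfact]
    rw [Polynomial.eval_multiset_prod, Multiset.map_map]
    simp
  rw [heval]
  have hnorm : ‖(P.roots.map fun a => z - a).prod‖
      = ((P.roots.map fun a => z - a).map fun w => ‖w‖).prod := by
    exact map_multiset_prod (normHom : ℂ →*₀ ℝ) _
  rw [hnorm, Multiset.map_map]
  have hle := myPowLeProd z.re (le_of_lt hz) ((P.roots).map fun a => ‖z - a‖) ?_
  · rwa [Multiset.card_map, hcard] at hle
  · intro x hx
    obtain ⟨r, hr, rfl⟩ := Multiset.mem_map.mp hx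
    calc z.re ≤ (z - r).re := by
          simp only [Complex.sub_re]
          linarith [hroots r hr]
      _ ≤ ‖z - r‖ := by exact Complex.re_le_norm _

/-- A matrix with a Hurwitz-unstable principal submatrix is `D`-unstable: there is a
positive diagonal scaling `D` such that `A · D` is Hurwitz-unstable. -/
theorem hurwitz_unstable_principal_submatrix_D_unstable
    {n : Type*} [Fintype n] [DecidableEq n] (A : Matrix n n ℝ)
    (S : Finset n) (hS : S.Nonempty)
    (hsub : HurwitzUnstable (A.submatrix (fun i : S => (i : n)) (fun j : S => (j : n)))) :
    ∃ d : n → ℝ, (∀ i, 0 < d i) ∧ HurwitzUnstable (A * Matrix.diagonal d) := by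
  classical
  obtain ⟨z, hroot, hz⟩ := hsub
  have hz0 : z ≠ 0 := by
    intro h; rw [h] at hz; simp at hz
  set N := Fintype.card n with hN
  set d : ℝ → n → ℝ := fun ε i => if i ∈ S then 1 else ε with hd
  set f : ℝ → ℂ := fun ε =>
    (Matrix.diagonal (fun _ : n => z)
      - ((A * Matrix.diagonal (d ε)).map (algebraMap ℝ ℂ))).det with hf
  -- f is continuous
  have hcont : Continuous f := by
    apply Continuous.matrix_det
    apply Continuous.sub continuous_const
    apply continuous_matrix
    intro i j
    simp only [Matrix.map_apply, Matrix.mul_diagonal]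
    have hdc : Continuous fun ε : ℝ => d ε j := by
      simp only [hd]
      split_ifs with hj
      · exact continuous_const
      · exact continuous_id
    exact Complex.continuous_ofReal.comp (continuous_const.mul hdc)
  -- eigenvector of the complexified submatrix
  set Bc : Matrix S S ℂ :=
    (A.submatrix (fun i : S => (i : n)) (fun j : S => (j : n))).map (algebraMap ℝ ℂ) with hBc
  have hdetB : (Matrix.diagonal (fun _ : S => z) - Bc).det = 0 := by
    have h1 : Bc.charpoly.eval z = 0 := by
      rw [hBc, Matrix.charpoly_map]
      exact hroot
    rwa [myEvalCharpoly] at h1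
  obtain ⟨v, hv0, hv⟩ := (Matrix.exists_mulVec_eq_zero_iff).mpr hdetB
  have hvB : ∀ i : S, Bc.mulVec v i = z * v i := by
    intro i
    have h2 := congrFun hv i
    rw [Matrix.sub_mulVec, Pi.sub_apply, Matrix.mulVec_diagonal, Pi.zero_apply,
      sub_eq_zero] at h2
    exact h2.symm
  -- eigenvector of the limit matrix
  set w : n → ℂ := fun i =>
    if h : i ∈ S then v ⟨i, h⟩
    else (∑ j : S, (algebraMap ℝ ℂ (A i j)) * v j) / z with hw
  have hwS : ∀ (i : n) (hi : i ∈ S), w i = v ⟨i, hi⟩ := by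
    intro i hi; simp [hw, hi]
  have hw0 : w ≠ 0 := by
    obtain ⟨j, hj⟩ := Function.ne_iff.mp hv0
    intro hcon
    apply hj
    have h3 := congrFun hcon (j : n)
    rw [hwS j j.2] at h3
    simpa using h3
  -- the limit matrix has eigenvalue z with eigenvector w
  have hmul : ∀ i, (((A * Matrix.diagonal (d 0)).map (algebraMap ℝ ℂ)).mulVec w) i
      = z * w i := by
    intro i
    have hsum : (((A * Matrix.diagonal (d 0)).map (algebraMap ℝ ℂ)).mulVec w) i
        = ∑ j : S, (algebraMap ℝ ℂ (A i j)) * v j := by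
      rw [Matrix.mulVec]
      simp only [dotProduct, Matrix.map_apply, Matrix.mul_diagonal]
      have step : ∀ j : n, (algebraMap ℝ ℂ (A i j * d 0 j)) * w j
          = if j ∈ S then (algebraMap ℝ ℂ (A i j)) * w j else 0 := by
        intro j
        by_cases hj : j ∈ S <;> simp [hd, hj]
      rw [Finset.sum_congr rfl (fun j _ => step j), Finset.sum_ite_mem,
        Finset.univ_inter, ← Finset.sum_coe_sort S (fun j => (algebraMap ℝ ℂ (A i j)) * w j)]
      exact Finset.sum_congr rfl fun j _ => by rw [hwS j j.2]
    by_cases hi : i ∈ S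
    · have h4 : Bc.mulVec v ⟨i, hi⟩ = ∑ j : S, (algebraMap ℝ ℂ (A i j)) * v j := by
        rw [Matrix.mulVec]
        simp [dotProduct, hBc, Matrix.map_apply, Matrix.submatrix_apply]
      rw [hsum, ← h4, hvB ⟨i, hi⟩, hwS i hi]
    · rw [hsum]
      have h5 : w i = (∑ j : S, (algebraMap ℝ ℂ (A i j)) * v j) / z := by
        simp [hw, hi]
      rw [h5, mul_div_cancel₀ _ hz0]
  have h0 : f 0 = 0 := by
    rw [hf]
    apply (Matrix.exists_mulVec_eq_zero_iff).mp
    refine ⟨w, hw0, ?_⟩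
    funext i
    rw [Matrix.sub_mulVec, Pi.sub_apply, Matrix.mulVec_diagonal, hmul i, sub_self,
      Pi.zero_apply]
  -- find small positive ε
  have hb : 0 < z.re ^ N := pow_pos hz N
  have hev : ∀ᶠ ε in 𝓝 (0:ℝ), ‖f ε‖ < z.re ^ N := by
    have ht : Tendsto (fun ε => ‖f ε‖) (𝓝 0) (𝓝 ‖f 0‖) := (hcont.norm).tendsto 0
    rw [h0, norm_zero] at ht
    exact ht.eventually_lt_const hb
  have hex : ∃ ε : ℝ, ‖f ε‖ < z.re ^ N ∧ ε ∈ Set.Ioi (0:ℝ) := by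
    exact ((hev.filter_mono (nhdsWithin_le_nhds (s := Set.Ioi (0:ℝ)))).and
      eventually_mem_nhdsWithin).exists
  obtain ⟨ε, hlt, hε⟩ := hex
  refine ⟨d ε, ?_, ?_⟩
  · intro i
    by_cases hi : i ∈ S
    · simp [hd, hi]
    · simpa [hd, hi] using hε
  · by_contra hcon
    have hge := myNormEvalGe (A * Matrix.diagonal (d ε)) z hz hcon
    have heq : (((A * Matrix.diagonal (d ε)).charpoly).map (algebraMap ℝ ℂ)).eval z = f ε := by
      rw [← Matrix.charpoly_map, myEvalCharpoly]
    rw [heq] at hge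
    rw [hN] at hlt
    linarith
end

section
/- Let X and R be finite types and Adj : (X ⊕ R) → (X ⊕ R) → Prop a directed-graph relation that is bipartite (¬Adj (Sum.inl x) (Sum.inl x') and ¬Adj (Sum.inr r) (Sum.inr r') for all x, x', r, r') and satisfies: every x ∈ X has exactly one out-neighbour (∀ x, ∃! r, Adj (Sum.inl x) (Sum.inr r)) and every r ∈ R has exactly one in-neighbour (∀ r, ∃! x, Adj (Sum.inl x) (Sum.inr r)). If the graph is strongly connected (∀ u v, Relation.ReflTransGen Adj u v), then it has no cut vertex: for every vertex v₀ and all vertices a, b distinct from v₀, Relation.ReflTransGen (fun u w => u ≠ v₀ ∧ w ≠ v₀ ∧ (Adj u w ∨ Adj w u)) a b holds. -/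
/-- A strongly connected bipartite digraph in which every species vertex has exactly
one out-neighbour and every reaction vertex has exactly one in-neighbour has no cut
vertex: after deleting any single vertex, any two remaining vertices are joined by
a walk in the symmetrized edge relation avoiding the deleted vertex. -/
theorem childSelective_strongly_connected_no_cut_vertex
    {X R : Type*} [Fintype X] [Fintype R]
    (Adj : (X ⊕ R) → (X ⊕ R) → Prop)
    (hbipXX : ∀ x x' : X, ¬ Adj (Sum.inl x) (Sum.inl x'))
    (hbipRR : ∀ r r' : R, ¬ Adj (Sum.inr r) (Sum.inr r'))
    (hout : ∀ x : X, ∃! r : R, Adj (Sum.inl x) (Sum.inr r))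
    (hin : ∀ r : R, ∃! x : X, Adj (Sum.inl x) (Sum.inr r))
    (hsc : ∀ u v : X ⊕ R, Relation.ReflTransGen Adj u v) :
    ∀ v₀ a b : X ⊕ R, a ≠ v₀ → b ≠ v₀ →
      Relation.ReflTransGen
        (fun u w => u ≠ v₀ ∧ w ≠ v₀ ∧ (Adj u w ∨ Adj w u)) a b := by
  intro v₀ a b ha hb
  set S : (X ⊕ R) → (X ⊕ R) → Prop :=
    fun u w => u ≠ v₀ ∧ w ≠ v₀ ∧ (Adj u w ∨ Adj w u) with hS
  set A' : (X ⊕ R) → (X ⊕ R) → Prop :=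
    fun u w => u ≠ v₀ ∧ w ≠ v₀ ∧ Adj u w with hA'
  -- reversing an avoiding directed path gives an avoiding symmetric walk
  have hrev : ∀ {u v : X ⊕ R}, Relation.ReflTransGen A' u v →
      Relation.ReflTransGen S v u := by
    intro u v h
    induction h using Relation.ReflTransGen.head_induction_on with
    | refl => exact Relation.ReflTransGen.refl
    | head h' _ ih => exact ih.tail ⟨h'.2.1, h'.1, Or.inr h'.2.2⟩
  -- crossing lemma: if u → v₀ → w then u and w are joined avoiding v₀
  have hcross : ∀ u w : X ⊕ R, u ≠ v₀ → w ≠ v₀ → Adj u v₀ → Adj v₀ w →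
      Relation.ReflTransGen S u w := by
    intro u w hu hw huv hvw
    cases v₀ with
    | inr r₀ =>
      obtain ⟨x₀, hx₀, hx₀u⟩ := hin r₀
      -- u must be inl x₀
      have hux : u = Sum.inl x₀ := by
        cases u with
        | inl x => exact congrArg Sum.inl (hx₀u x huv)
        | inr r => exact absurd huv (hbipRR r r₀)
      subst hux
      -- any directed path to x₀ can be truncated to avoid r₀
      have key : ∀ p : X ⊕ R, Relation.ReflTransGen Adj p (Sum.inl x₀) →
          p ≠ (Sum.inr r₀ : X ⊕ R) →
          Relation.ReflTransGen A' p (Sum.inl x₀) := by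
        intro p hp
        induction hp using Relation.ReflTransGen.head_induction_on with
        | refl => intro _; exact Relation.ReflTransGen.refl
        | @head p c hadj htail ih =>
          intro hp0
          by_cases hc : c = (Sum.inr r₀ : X ⊕ R)
          · subst hc
            have : p = Sum.inl x₀ := by
              cases p with
              | inl x => exact congrArg Sum.inl (hx₀u x hadj)
              | inr r => exact absurd hadj (hbipRR r r₀)
            subst this
            exact Relation.ReflTransGen.refl
          · exact (ih hc).head ⟨hp0, hc, hadj⟩
      exact hrev (key w (hsc w (Sum.inl x₀)) hw)
    | inl x₀ =>
      obtain ⟨r₀, hr₀, hr₀u⟩ := hout x₀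
      -- w must be inr r₀
      have hwr : w = Sum.inr r₀ := by
        cases w with
        | inl x => exact absurd hvw (hbipXX x₀ x)
        | inr r => exact congrArg Sum.inr (hr₀u r hvw)
      subst hwr
      -- any directed path from r₀ can be adjusted to avoid x₀
      have key2 : ∀ p : X ⊕ R, Relation.ReflTransGen Adj p u →
          ((p = Sum.inl x₀ → Relation.ReflTransGen A' (Sum.inr r₀) u) ∧
           (p ≠ (Sum.inl x₀ : X ⊕ R) →
             (Relation.ReflTransGen A' (Sum.inr r₀) u ∨
              Relation.ReflTransGen A' p u))) := by
        intro p hp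
        induction hp using Relation.ReflTransGen.head_induction_on with
        | refl =>
          exact ⟨fun h => absurd h hu, fun _ => Or.inr Relation.ReflTransGen.refl⟩
        | @head p c hadj htail ih =>
          constructor
          · intro hpv
            subst hpv
            have hcr : c = Sum.inr r₀ := by
              cases c with
              | inl x => exact absurd hadj (hbipXX x₀ x)
              | inr r => exact congrArg Sum.inr (hr₀u r hadj)
            subst hcr
            rcases ih.2 (by simp) with h | h
            · exact h
            · exact h
          · intro hp0
            by_cases hc : c = (Sum.inl x₀ : X ⊕ R)
            · exact Or.inl (ih.1 hc)
            · rcases ih.2 hc with h | h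
              · exact Or.inl h
              · exact Or.inr (h.head ⟨hp0, hc, hadj⟩)
      have hpath : Relation.ReflTransGen A' (Sum.inr r₀) u := by
        rcases (key2 (Sum.inr r₀) (hsc (Sum.inr r₀) u)).2 (by simp) with h | h
        · exact h
        · exact h
      exact hrev hpath
  -- no self-loop at v₀
  have noloop : ¬ Adj v₀ v₀ := by
    cases v₀ with
    | inl x => exact hbipXX x x
    | inr r => exact hbipRR r r
  -- contract passages through v₀
  have main : ∀ p : X ⊕ R, Relation.ReflTransGen Adj p b →
      ((p = v₀ → ∃ c, Adj v₀ c ∧ c ≠ v₀ ∧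
          Relation.ReflTransGen
            (fun u w => u ≠ v₀ ∧ w ≠ v₀ ∧ (Adj u w ∨ (Adj u v₀ ∧ Adj v₀ w))) c b) ∧
       (p ≠ v₀ →
          Relation.ReflTransGen
            (fun u w => u ≠ v₀ ∧ w ≠ v₀ ∧ (Adj u w ∨ (Adj u v₀ ∧ Adj v₀ w))) p b)) := by
    intro p hp
    induction hp using Relation.ReflTransGen.head_induction_on with
    | refl => exact ⟨fun h => absurd h hb, fun _ => Relation.ReflTransGen.refl⟩
    | @head p c hadj htail ih =>
      constructor
      · intro hpv
        by_cases hc : c = v₀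
        · refine absurd ?_ noloop
          exact hpv ▸ (hc ▸ hadj : Adj p v₀)
        · exact ⟨c, hpv ▸ hadj, hc, ih.2 hc⟩
      · intro hp0
        by_cases hc : c = v₀
        · subst hc
          obtain ⟨c', h1, h2, h3⟩ := ih.1 rfl
          exact h3.head ⟨hp0, h2, Or.inr ⟨hadj, h1⟩⟩
        · exact (ih.2 hc).head ⟨hp0, hc, Or.inl hadj⟩
  have h2 := (main a (hsc a b)).2 ha
  -- translate contracted steps into symmetric avoiding walks
  clear ha
  induction h2 using Relation.ReflTransGen.head_induction_on with
  | refl => exact Relation.ReflTransGen.refl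
  | @head p c hstep htail ih =>
    obtain ⟨hp, hc, hor⟩ := hstep
    rcases hor with h | ⟨h1, hvc⟩
    · exact (Relation.ReflTransGen.head ⟨hp, hc, Or.inl h⟩ Relation.ReflTransGen.refl).trans ih
    · exact (hcross p c hp hc h1 hvc).trans ih
end

section
/- Let X and R be finite types, and let s⁺, s⁻ : X → R → ℝ take only nonnegative values with no explicit catalysis: s⁺ x r · s⁻ x r = 0 for all x, r. Let κ : X ≃ R satisfy 0 < s⁻ x (κ x) for every x (a Child-Selection), and define the CS matrix A : Matrix X X ℝ by A x w = s⁺ x (κ w) − s⁻ x (κ w). Then A is autocatalytic if and only if both of the following hold: (1) there is a vector v : X → ℝ with all entries strictly positive such that every entry of A·v is strictly positive; (2) the König graph of the Child-Selection has no source and no sink vertices, i.e., for every x ∈ X there exists w with 0 < s⁺ x (κ w), and for every w ∈ X there exists y with 0 < s⁺ y (κ w). -/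
/-- The CS matrix of a Child-Selection is autocatalytic if and only if there is a
strictly positive vector with strictly positive image and the König graph of the
Child-Selection has neither source nor sink vertices. -/
theorem cs_autocatalytic_iff_positive_vector_and_no_source_sink
    {X R : Type*} [Fintype X] [Fintype R]
    (sp sm : X → R → ℝ)
    (hsp : ∀ x r, 0 ≤ sp x r) (hsm : ∀ x r, 0 ≤ sm x r)
    (hnocat : ∀ x r, sp x r * sm x r = 0)
    (κ : X ≃ R) (hκ : ∀ x, 0 < sm x (κ x))
    (A : Matrix X X ℝ) (hA : ∀ x w, A x w = sp x (κ w) - sm x (κ w)) :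
    IsAutocatalytic A ↔
      ((∃ v : X → ℝ, (∀ j, 0 < v j) ∧ ∀ i, 0 < A.mulVec v i) ∧
       (∀ x : X, ∃ w : X, 0 < sp x (κ w)) ∧
       (∀ w : X, ∃ y : X, 0 < sp y (κ w))) := by
  -- sp positive implies sm zero
  have hsm0 : ∀ x r, 0 < sp x r → sm x r = 0 := by
    intro x r h
    rcases mul_eq_zero.mp (hnocat x r) with h' | h'
    · exact absurd h' (ne_of_gt h)
    · exact h'
  -- A x w > 0 iff sp x (κ w) > 0
  have hpos : ∀ x w, 0 < A x w ↔ 0 < sp x (κ w) := by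
    intro x w
    rw [hA]
    constructor
    · intro h
      nlinarith [hsm x (κ w), hsp x (κ w)]
    · intro h
      rw [hsm0 x (κ w) h]
      linarith
  constructor
  · rintro ⟨⟨v, hv, hAv⟩, hcol⟩
    refine ⟨⟨v, hv, hAv⟩, ?_, ?_⟩
    · intro x
      have h := hAv x
      unfold Matrix.mulVec dotProduct at h
      by_contra hc
      push_neg at hc
      have : ∑ w, A x w * v w ≤ 0 := by
        apply Finset.sum_nonpos
        intro w _
        have hAxw : A x w ≤ 0 := by
          by_contra h'
          push_neg at h'
          exact absurd ((hpos x w).mp h') (not_lt.mpr (hc w))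
        exact mul_nonpos_of_nonpos_of_nonneg hAxw (le_of_lt (hv w))
      linarith
    · intro w
      obtain ⟨y, hy⟩ := (hcol w).2
      exact ⟨y, (hpos y w).mp hy⟩
  · rintro ⟨hv, _, hsink⟩
    refine ⟨hv, fun w => ⟨⟨w, ?_⟩, ?_⟩⟩
    · rw [hA]
      have hspw : sp w (κ w) = 0 := by
        rcases mul_eq_zero.mp (hnocat w (κ w)) with h' | h'
        · exact h'
        · exact absurd h' (ne_of_gt (hκ w))
      rw [hspw]
      linarith [hκ w]
    · obtain ⟨y, hy⟩ := hsink w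
      exact ⟨y, (hpos y w).mpr hy⟩
end

section
/- Let X and R be finite types and Adj : (X ⊕ R) → (X ⊕ R) → Prop a bipartite directed-graph relation (¬Adj (Sum.inl x) (Sum.inl x') and ¬Adj (Sum.inr r) (Sum.inr r')) such that every x ∈ X has exactly one out-neighbour (∀ x, ∃! r, Adj (Sum.inl x) (Sum.inr r)) and every r ∈ R has exactly one in-neighbour (∀ r, ∃! x, Adj (Sum.inl x) (Sum.inr r)). Let V' be a subset of X ⊕ R with at least two elements and Adj' a relation with Adj' u w → Adj u w ∧ u ∈ V' ∧ w ∈ V', and suppose the subgraph (V', Adj') is strongly connected: for all u, v ∈ V', Relation.ReflTransGen Adj' u v. Then: every x with Sum.inl x ∈ V' has exactly one r with Adj' (Sum.inl x) (Sum.inr r); every r with Sum.inr r ∈ V' has exactly one x with Adj' (Sum.inl x) (Sum.inr r); and the sets {x | Sum.inl x ∈ V'} and {r | Sum.inr r ∈ V'} have the same cardinality. -/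
/-- A strongly connected subgraph (on at least two vertices) of a bipartite digraph in
which every species vertex has exactly one out-neighbour and every reaction vertex
has exactly one in-neighbour inherits the degree conditions and has equally many
species and reaction vertices. -/
theorem strong_subgraph_of_fluffle_is_fluffle
    {X R : Type*} [Fintype X] [Fintype R]
    (Adj Adj' : (X ⊕ R) → (X ⊕ R) → Prop)
    (hbipXX : ∀ x x' : X, ¬ Adj (Sum.inl x) (Sum.inl x'))
    (hbipRR : ∀ r r' : R, ¬ Adj (Sum.inr r) (Sum.inr r'))
    (hout : ∀ x : X, ∃! r : R, Adj (Sum.inl x) (Sum.inr r))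
    (hin : ∀ r : R, ∃! x : X, Adj (Sum.inl x) (Sum.inr r))
    (V' : Set (X ⊕ R)) (hV' : V'.Nontrivial)
    (hsub : ∀ u w, Adj' u w → Adj u w ∧ u ∈ V' ∧ w ∈ V')
    (hsc : ∀ u ∈ V', ∀ v ∈ V', Relation.ReflTransGen Adj' u v) :
    (∀ x : X, Sum.inl x ∈ V' → ∃! r : R, Adj' (Sum.inl x) (Sum.inr r)) ∧
    (∀ r : R, Sum.inr r ∈ V' → ∃! x : X, Adj' (Sum.inl x) (Sum.inr r)) ∧
    {x : X | Sum.inl x ∈ V'}.ncard = {r : R | Sum.inr r ∈ V'}.ncard := by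
  have hother : ∀ u ∈ V', ∃ v ∈ V', v ≠ u := by
    intro u hu
    obtain ⟨a, ha, b, hb, hab⟩ := hV'
    by_cases h : a = u
    · exact ⟨b, hb, by simpa [h] using hab.symm⟩
    · exact ⟨a, ha, h⟩
  have ex_out : ∀ x : X, Sum.inl x ∈ V' → ∃ r : R, Adj' (Sum.inl x) (Sum.inr r) := by
    intro x hx
    obtain ⟨v, hv, hne⟩ := hother _ hx
    rcases (hsc _ hx _ hv).cases_head with h | ⟨w, hw, -⟩
    · exact absurd h.symm hne
    · rcases w with x' | r
      · exact absurd (hsub _ _ hw).1 (hbipXX x x')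
      · exact ⟨r, hw⟩
  have ex_in : ∀ r : R, Sum.inr r ∈ V' → ∃ x : X, Adj' (Sum.inl x) (Sum.inr r) := by
    intro r hr
    obtain ⟨v, hv, hne⟩ := hother _ hr
    rcases (hsc _ hv _ hr).cases_tail with h | ⟨w, -, hw⟩
    · exact absurd h.symm hne
    · rcases w with x | r'
      · exact ⟨x, hw⟩
      · exact absurd (hsub _ _ hw).1 (hbipRR r' r)
  have uniq_out : ∀ x : X, Sum.inl x ∈ V' → ∃! r : R, Adj' (Sum.inl x) (Sum.inr r) := by
    intro x hx
    obtain ⟨r, hr⟩ := ex_out x hx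
    exact ⟨r, hr, fun r' hr' => (hout x).unique (hsub _ _ hr').1 (hsub _ _ hr).1⟩
  have uniq_in : ∀ r : R, Sum.inr r ∈ V' → ∃! x : X, Adj' (Sum.inl x) (Sum.inr r) := by
    intro r hr
    obtain ⟨x, hx⟩ := ex_in r hr
    exact ⟨x, hx, fun x' hx' => (hin r).unique (hsub _ _ hx').1 (hsub _ _ hx).1⟩
  refine ⟨uniq_out, uniq_in, ?_⟩
  choose f hf using fun x : {x : X | Sum.inl x ∈ V'} => ex_out x x.2
  choose g hg using fun r : {r : R | Sum.inr r ∈ V'} => ex_in r r.2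
  have hfmem : ∀ x, Sum.inr (f x) ∈ V' := fun x => (hsub _ _ (hf x)).2.2
  have hgmem : ∀ r, Sum.inl (g r) ∈ V' := fun r => (hsub _ _ (hg r)).2.1
  rw [← Nat.card_coe_set_eq, ← Nat.card_coe_set_eq]
  refine Nat.card_congr ⟨fun x => ⟨f x, hfmem x⟩, fun r => ⟨g r, hgmem r⟩, ?_, ?_⟩
  · intro x
    ext
    exact (hin (f x)).unique (hsub _ _ (hg ⟨f x, hfmem x⟩)).1 (hsub _ _ (hf x)).1
  · intro r
    ext
    exact (hout (g r)).unique (hsub _ _ (hf ⟨g r, hgmem r⟩)).1 (hsub _ _ (hg r)).1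
end
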